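/- arXiv:1506.01233 — 3 statements merged into one kernel-verified Lean document; each statement's English description precedes it below -/
import Mathlib

section
/- The oscillator circuit C of Example 2 is not K-Lipschitz robust for any K with respect to timed Manhattan distances: its output on input i₂ (which is 1 on [0,ε) and 0 elsewhere on [0,T]) is 1 exactly on ⋃_{j=0}^{⌊T⌋} [j, j+ε) ∩ [0,T], while its output on the zero input i₁ is constantly 0; hence d_TM(output) ≥ ⌊T⌋·ε while d_TM(i₁,i₂) = ε, and for any K choose T > K+1 to violate K-robustness. -/
open MeasureTheory

/-- Example 2, circuit `C`: the output on the transient-fault input `i₂`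
(indicator of `[0,ε)`) is the indicator of `⋃ j, [j, j+ε)`, while the output on
the zero input is zero.  `C` is not `K`-Lipschitz robust w.r.t. timed Manhattan
distances, for any `K`. -/
theorem oscillator_not_robust :
    ∀ K : ℝ, 0 < K → ∃ (T : ℕ) (ε : ℝ), 0 < ε ∧ ε < 1 ∧
      (∫ x in Set.Icc (0 : ℝ) T,
          |Set.indicator (⋃ j : ℕ, Set.Ico (j : ℝ) ((j : ℝ) + ε)) (fun _ => (1 : ℝ)) x - 0|) >
        K * ∫ x in Set.Icc (0 : ℝ) T,
          |Set.indicator (Set.Ico (0 : ℝ) ε) (fun _ => (1 : ℝ)) x - 0| := by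
  intro K hK
  refine ⟨⌈K⌉₊ + 1, 1/2, by norm_num, by norm_num, ?_⟩
  set T : ℕ := ⌈K⌉₊ + 1 with hT
  set ε : ℝ := 1/2 with hε
  have hε0 : (0:ℝ) < ε := by norm_num
  have hε1 : ε ≤ 1 := by norm_num
  have hT1 : (1:ℝ) ≤ (T:ℝ) := by exact_mod_cast Nat.one_le_iff_ne_zero.mpr (by omega)
  have habs : ∀ (S : Set ℝ) (x : ℝ),
      |Set.indicator S (fun _ => (1:ℝ)) x - 0| = Set.indicator S (fun _ => (1:ℝ)) x := by
    intro S x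
    rw [sub_zero, abs_of_nonneg (Set.indicator_nonneg (fun _ _ => zero_le_one) x)]
  simp only [habs]
  have hmU : MeasurableSet (⋃ j : ℕ, Set.Ico (j : ℝ) ((j : ℝ) + ε)) :=
    MeasurableSet.iUnion fun j => measurableSet_Ico
  rw [MeasureTheory.setIntegral_indicator measurableSet_Ico,
      MeasureTheory.setIntegral_indicator hmU,
      MeasureTheory.setIntegral_const, MeasureTheory.setIntegral_const]
  simp only [smul_eq_mul, mul_one]
  -- RHS
  rw [Set.inter_comm (Set.Icc 0 (T:ℝ)) (Set.Ico 0 ε), Set.inter_comm (Set.Icc 0 (T:ℝ))]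
  have hRHSset : Set.Ico (0:ℝ) ε ∩ Set.Icc 0 (T:ℝ) = Set.Ico 0 ε := by
    apply Set.inter_eq_left.mpr
    intro x hx
    exact ⟨hx.1, le_trans (le_of_lt hx.2) (le_trans hε1 hT1)⟩
  rw [hRHSset, measureReal_def, measureReal_def, Real.volume_Ico]
  -- LHS lower bound
  have hsub : (⋃ j ∈ Finset.range T, Set.Ico (j : ℝ) ((j : ℝ) + ε)) ⊆
      (⋃ j : ℕ, Set.Ico (j : ℝ) ((j : ℝ) + ε)) ∩ Set.Icc 0 (T:ℝ) := by
    intro x hx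
    simp only [Set.mem_iUnion, Finset.mem_range] at hx
    obtain ⟨j, hj, hxj⟩ := hx
    refine ⟨Set.mem_iUnion.mpr ⟨j, hxj⟩, ?_, ?_⟩
    · exact le_trans (Nat.cast_nonneg j) hxj.1
    · have : (j:ℝ) + ε ≤ T := by
        have : (j:ℝ) + 1 ≤ T := by exact_mod_cast hj
        linarith
      linarith [hxj.2]
  have hdisj : (↑(Finset.range T) : Set ℕ).PairwiseDisjoint
      (fun j : ℕ => Set.Ico (j : ℝ) ((j : ℝ) + ε)) := by
    intro i _ j _ hij
    rcases lt_or_gt_of_ne hij with h | h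
    · apply Set.Ico_disjoint_Ico.mpr
      have h1 : (i:ℝ) + 1 ≤ j := by exact_mod_cast h
      exact le_trans (min_le_left _ _) (le_trans (by linarith) (le_max_right (i:ℝ) j))
    · apply Set.Ico_disjoint_Ico.mpr
      have h1 : (j:ℝ) + 1 ≤ i := by exact_mod_cast h
      exact le_trans (min_le_right _ _) (le_trans (by linarith) (le_max_left (i:ℝ) j))
  have hmeasUnion : volume (⋃ j ∈ Finset.range T, Set.Ico (j : ℝ) ((j : ℝ) + ε))
      = T * ENNReal.ofReal ε := by
    rw [measure_biUnion_finset hdisj (fun j _ => measurableSet_Ico)]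
    simp only [Real.volume_Ico, add_sub_cancel_left]
    simp [Finset.sum_const, nsmul_eq_mul]
  have hfin : volume ((⋃ j : ℕ, Set.Ico (j : ℝ) ((j : ℝ) + ε)) ∩ Set.Icc 0 (T:ℝ)) ≠ ⊤ := by
    apply ne_top_of_le_ne_top _ (measure_mono Set.inter_subset_right)
    simp [Real.volume_Icc]
  have hmono := measure_mono (μ := volume) hsub
  rw [hmeasUnion] at hmono
  have hLHS : (T:ℝ) * ε ≤
      (volume ((⋃ j : ℕ, Set.Ico (j : ℝ) ((j : ℝ) + ε)) ∩ Set.Icc 0 (T:ℝ))).toReal := by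
    have := ENNReal.toReal_mono hfin hmono
    rwa [ENNReal.toReal_mul, ENNReal.toReal_natCast, ENNReal.toReal_ofReal hε0.le] at this
  have hKT : K < (T:ℝ) := by
    have := Nat.le_ceil K
    have h2 : (⌈K⌉₊:ℝ) < T := by exact_mod_cast Nat.lt_succ_self _
    linarith
  have : K * (ENNReal.ofReal (ε - 0)).toReal = K * ε := by
    rw [sub_zero, ENNReal.toReal_ofReal hε0.le]
  rw [this]
  calc K * ε < (T:ℝ) * ε := by nlinarith
    _ ≤ _ := hLHS
end

section
/- The Skorokhod distance realized over piecewise linear distortions is no larger than over arbitrary continuous bijections: for step functions f, g on [0,T] where g has n value-change points, for every λ ∈ Λ (continuous increasing bijection of [0,T] fixing endpoints) there exists a piecewise linear μ ∈ Λ with at most n+1 linear pieces such that g ∘ μ = g ∘ λ pointwise. -/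
/-- `μ` is piecewise linear on `[0,T]` with at most `k` linear pieces. -/
def PiecewiseLinearOn (T : ℝ) (k : ℕ) (μ : ℝ → ℝ) : Prop :=
  ∃ m : ℕ, m ≤ k ∧ ∃ p : Fin (m + 1) → ℝ, Monotone p ∧ p 0 = 0 ∧ p (Fin.last m) = T ∧
    ∀ i : Fin m, ∃ a b : ℝ, ∀ x ∈ Set.Icc (p i.castSucc) (p i.succ), μ x = a * x + b

/-- `g` is a step function on `[0,T]` changing value only at `t 0 < … < t (n-1)`. -/
def IsStepWithChanges {α : Type*} (T : ℝ) (g : ℝ → α) (n : ℕ) (t : Fin n → ℝ) : Prop :=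
  StrictMono t ∧ (∀ j, t j ∈ Set.Ioo (0 : ℝ) T) ∧
    ∀ x ∈ Set.Icc (0 : ℝ) T, ∀ y ∈ Set.Icc (0 : ℝ) T,
      (∀ j, (t j ≤ x ↔ t j ≤ y)) → g x = g y

namespace SkorokhodAux

lemma ramp_mono {a b x y : ℝ} (hab : a ≤ b) (hxy : x ≤ y) :
    min x b - min x a ≤ min y b - min y a := by
  simp only [min_def]; split_ifs <;> linarith

noncomputable def nodeF (T : ℝ) {n : ℕ} (s : Fin n → ℝ) (k : ℕ) : ℝ :=
  if k = 0 then 0 else if h : k - 1 < n then s ⟨k - 1, h⟩ else T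

lemma nodeF_zero (T : ℝ) {n : ℕ} (s : Fin n → ℝ) : nodeF T s 0 = 0 := by simp [nodeF]

lemma nodeF_mid (T : ℝ) {n : ℕ} (s : Fin n → ℝ) {k : ℕ} (h1 : k ≠ 0) (h2 : k - 1 < n) :
    nodeF T s k = s ⟨k - 1, h2⟩ := by
  rw [nodeF, if_neg h1, dif_pos h2]

lemma nodeF_last (T : ℝ) {n : ℕ} (s : Fin n → ℝ) {k : ℕ} (h : n + 1 ≤ k) :
    nodeF T s k = T := by
  rw [nodeF, if_neg (by omega), dif_neg (by omega)]

noncomputable def interp (q v : ℕ → ℝ) (m : ℕ) (x : ℝ) : ℝ :=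
  ∑ i ∈ Finset.range m,
    (v (i + 1) - v i) / (q (i + 1) - q i) * (min x (q (i + 1)) - min x (q i))

lemma mono_of_step {q : ℕ → ℝ} {m : ℕ} (hq : ∀ k < m, q k < q (k + 1)) :
    ∀ a b : ℕ, a ≤ b → b ≤ m → q a ≤ q b := by
  intro a b hab hbm
  induction b with
  | zero => have : a = 0 := by omega
            rw [this]
  | succ b ih =>
    by_cases h : a = b + 1
    · rw [h]
    · exact (ih (by omega) (by omega)).trans (hq b (by omega)).le

lemma interp_piece {q v : ℕ → ℝ} {m : ℕ} (hq : ∀ k < m, q k < q (k + 1))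
    {k : ℕ} (hk : k < m) {x : ℝ} (hx1 : q k ≤ x) (hx2 : x ≤ q (k + 1)) :
    interp q v m x = v k - v 0 + (v (k + 1) - v k) / (q (k + 1) - q k) * (x - q k) := by
  unfold interp
  rw [Finset.range_eq_Ico,
    ← Finset.sum_Ico_consecutive _ (Nat.zero_le (k + 1)) (by omega : k + 1 ≤ m)]
  have h2 : (∑ j ∈ Finset.Ico (k + 1) m,
      (v (j + 1) - v j) / (q (j + 1) - q j) * (min x (q (j + 1)) - min x (q j))) = 0 := by
    refine Finset.sum_eq_zero fun j hj => ?_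
    rw [Finset.mem_Ico] at hj
    have hxj : x ≤ q j := hx2.trans (mono_of_step hq (k + 1) j hj.1 (by omega))
    have hxj1 : x ≤ q (j + 1) := hxj.trans (hq j hj.2).le
    rw [min_eq_left hxj, min_eq_left hxj1]
    ring
  rw [h2, add_zero, ← Finset.range_eq_Ico, Finset.sum_range_succ]
  have h1 : ∀ j ∈ Finset.range k,
      (v (j + 1) - v j) / (q (j + 1) - q j) * (min x (q (j + 1)) - min x (q j))
        = v (j + 1) - v j := by
    intro j hj
    rw [Finset.mem_range] at hj
    have hq1 : q (j + 1) ≤ x := (mono_of_step hq (j + 1) k (by omega) (by omega)).trans hx1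
    have hq0 : q j ≤ x := (hq j (by omega)).le.trans hq1
    rw [min_eq_right hq1, min_eq_right hq0, div_mul_cancel₀]
    exact sub_ne_zero.mpr (hq j (by omega)).ne'
  rw [Finset.sum_congr rfl h1, Finset.sum_range_sub (fun i => v i),
    min_eq_left hx2, min_eq_right hx1]

lemma interp_node {q v : ℕ → ℝ} {m : ℕ} (hq : ∀ k < m, q k < q (k + 1))
    {k : ℕ} (hk : k ≤ m) : interp q v m (q k) = v k - v 0 := by
  rcases lt_or_eq_of_le hk with h | h
  · rw [interp_piece hq h le_rfl (hq k h).le]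
    simp
  · subst h
    rcases Nat.eq_zero_or_pos k with h0 | h0
    · subst h0; simp [interp]
    · obtain ⟨mm, rfl⟩ : ∃ mm, k = mm + 1 := ⟨k - 1, by omega⟩
      have hlt : mm < mm + 1 := by omega
      have := interp_piece (v := v) hq hlt (hq mm hlt).le le_rfl
      rw [div_mul_cancel₀ _ (sub_ne_zero.mpr (hq mm hlt).ne')] at this
      rw [this]; ring

lemma interp_continuous (q v : ℕ → ℝ) (m : ℕ) : Continuous (interp q v m) := by
  refine continuous_finset_sum _ fun i _ => continuous_const.mul ?_
  exact (continuous_id.min continuous_const).sub (continuous_id.min continuous_const)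

end SkorokhodAux


open SkorokhodAux in
/-- Any continuous increasing timing distortion can be replaced by a piecewise
linear one (with at most `n+1` pieces) without changing `g ∘ λ`. -/
theorem skorokhod_piecewise_linear {α : Type*} (T : ℝ) (hT : 0 < T)
    (g : ℝ → α) (n : ℕ) (t : Fin n → ℝ) (hg : IsStepWithChanges T g n t)
    (l : ℝ → ℝ) (hcont : ContinuousOn l (Set.Icc 0 T))
    (hmono : StrictMonoOn l (Set.Icc 0 T))
    (hbij : Set.BijOn l (Set.Icc 0 T) (Set.Icc 0 T)) (h0 : l 0 = 0) (hTfix : l T = T) :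
    ∃ μ : ℝ → ℝ, PiecewiseLinearOn T (n + 1) μ ∧
      ContinuousOn μ (Set.Icc 0 T) ∧ StrictMonoOn μ (Set.Icc 0 T) ∧
      Set.BijOn μ (Set.Icc 0 T) (Set.Icc 0 T) ∧ μ 0 = 0 ∧ μ T = T ∧
      ∀ x ∈ Set.Icc (0 : ℝ) T, g (μ x) = g (l x) := by
  obtain ⟨ht_mono, ht_mem, hg_step⟩ := hg
  -- choose preimages s j of the change points
  have hex : ∀ j : Fin n, ∃ x, x ∈ Set.Icc (0 : ℝ) T ∧ l x = t j := fun j => by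
    obtain ⟨x, hx, hlx⟩ := hbij.surjOn (Set.Ioo_subset_Icc_self (ht_mem j))
    exact ⟨x, hx, hlx⟩
  choose s hsmem hsl using hex
  have hsIoo : ∀ j, 0 < s j ∧ s j < T := by
    intro j
    obtain ⟨h1, h2⟩ := hsmem j
    constructor
    · rcases h1.lt_or_eq with h | h
      · exact h
      · exfalso
        have : t j = 0 := by rw [← hsl j, ← h, h0]
        exact absurd this (ne_of_gt (ht_mem j).1)
    · rcases h2.lt_or_eq with h | h
      · exact h
      · exfalso
        have : t j = T := by rw [← hsl j, h, hTfix]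
        exact absurd this (ne_of_lt (ht_mem j).2)
  have hslt : ∀ a b : Fin n, a < b → s a < s b := by
    intro a b hab
    have : l (s a) < l (s b) := by rw [hsl, hsl]; exact ht_mono hab
    exact (hmono.lt_iff_lt (hsmem a) (hsmem b)).mp this
  set q : ℕ → ℝ := nodeF T s with hq_def
  set v : ℕ → ℝ := nodeF T t with hv_def
  -- basic facts about the nodes
  have hqmem : ∀ k, q k ∈ Set.Icc (0 : ℝ) T := by
    intro k
    rw [hq_def, nodeF]
    split_ifs with h1 h2
    · exact ⟨le_rfl, hT.le⟩
    · exact hsmem _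
    · exact ⟨hT.le, le_rfl⟩
  have hql : ∀ k, l (q k) = v k := by
    intro k
    rw [hq_def, hv_def, nodeF, nodeF]
    split_ifs with h1 h2
    · exact h0
    · exact hsl _
    · exact hTfix
  have hqstep : ∀ k < n + 1, q k < q (k + 1) := by
    intro k hk
    rcases Nat.eq_zero_or_pos k with h | h
    · subst h
      by_cases hn : 0 < n
      · rw [hq_def, nodeF_zero, nodeF_mid T s (by omega) (by omega)]
        exact (hsIoo _).1
      · rw [hq_def, nodeF_zero, nodeF_last T s (by omega)]
        exact hT
    · by_cases h2 : k < n
      · rw [hq_def, nodeF_mid T s (by omega) (by omega),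
          nodeF_mid T s (by omega) (show k + 1 - 1 < n by omega)]
        exact hslt _ _ (by simp only [Fin.mk_lt_mk]; omega)
      · have hkn : k = n := by omega
        subst hkn
        rw [hq_def, nodeF_mid T s (by omega) (by omega), nodeF_last T s (by omega)]
        exact (hsIoo _).2
  have hvstep : ∀ k < n + 1, v k < v (k + 1) := by
    intro k hk
    rw [← hql k, ← hql (k + 1)]
    exact hmono (hqmem k) (hqmem (k + 1)) (hqstep k hk)
  have hv0 : v 0 = 0 := nodeF_zero T t
  have hq0 : q 0 = 0 := nodeF_zero T s
  have hqT : q (n + 1) = T := nodeF_last T s le_rfl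
  have hvT : v (n + 1) = T := nodeF_last T t le_rfl
  set μ : ℝ → ℝ := interp q v (n + 1) with hμ_def
  have hμnode : ∀ k ≤ n + 1, μ (q k) = v k := by
    intro k hk
    rw [hμ_def, interp_node hqstep hk, hv0, sub_zero]
  have hμ0 : μ 0 = 0 := by have := hμnode 0 (by omega); rwa [hq0, hv0] at this
  have hμT : μ T = T := by have := hμnode (n + 1) le_rfl; rwa [hqT, hvT] at this
  have hμcont : Continuous μ := interp_continuous q v (n + 1)
  have hμmono : Monotone μ := by
    intro x y hxy
    refine Finset.sum_le_sum fun i hi => ?_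
    rw [Finset.mem_range] at hi
    have hslope : 0 ≤ (v (i + 1) - v i) / (q (i + 1) - q i) :=
      le_of_lt (div_pos (sub_pos.mpr (hvstep i hi)) (sub_pos.mpr (hqstep i hi)))
    exact mul_le_mul_of_nonneg_left (ramp_mono (hqstep i hi).le hxy) hslope
  have htel : ∀ x ∈ Set.Icc (0 : ℝ) T,
      (∑ i ∈ Finset.range (n + 1), (min x (q (i + 1)) - min x (q i))) = x := by
    intro x hx
    rw [Finset.sum_range_sub (fun i => min x (q i)), hqT, hq0,
      min_eq_left hx.2, min_eq_right hx.1, sub_zero]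
  have hμstrict : StrictMonoOn μ (Set.Icc 0 T) := by
    intro x hx y hy hxy
    have hsub : (∑ i ∈ Finset.range (n + 1),
        ((min y (q (i + 1)) - min y (q i)) - (min x (q (i + 1)) - min x (q i)))) = y - x := by
      rw [Finset.sum_sub_distrib, htel x hx, htel y hy]
    have hnn : ∀ i ∈ Finset.range (n + 1),
        0 ≤ (min y (q (i + 1)) - min y (q i)) - (min x (q (i + 1)) - min x (q i)) := by
      intro i hi
      rw [Finset.mem_range] at hi
      have := ramp_mono (a := q i) (b := q (i + 1)) (hqstep i hi).le hxy.le
      linarith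
    have hexpos : ∃ i ∈ Finset.range (n + 1),
        0 < (min y (q (i + 1)) - min y (q i)) - (min x (q (i + 1)) - min x (q i)) := by
      by_contra hcon
      push_neg at hcon
      have : (∑ i ∈ Finset.range (n + 1),
          ((min y (q (i + 1)) - min y (q i)) - (min x (q (i + 1)) - min x (q i)))) ≤ 0 :=
        Finset.sum_nonpos hcon
      rw [hsub] at this
      linarith
    have hpos : 0 < μ y - μ x := by
      have : μ y - μ x = ∑ i ∈ Finset.range (n + 1),
          (v (i + 1) - v i) / (q (i + 1) - q i) *
            ((min y (q (i + 1)) - min y (q i)) - (min x (q (i + 1)) - min x (q i))) := by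
        rw [hμ_def]; unfold interp
        rw [← Finset.sum_sub_distrib]
        exact Finset.sum_congr rfl fun i _ => by ring
      rw [this]
      obtain ⟨i0, hi0, hpi0⟩ := hexpos
      refine Finset.sum_pos' (fun i hi => ?_) ⟨i0, hi0, ?_⟩
      · have hi' := Finset.mem_range.mp hi
        exact mul_nonneg
          (le_of_lt (div_pos (sub_pos.mpr (hvstep i hi')) (sub_pos.mpr (hqstep i hi')))) (hnn i hi)
      · have hi0' := Finset.mem_range.mp hi0
        exact mul_pos
          (div_pos (sub_pos.mpr (hvstep i0 hi0')) (sub_pos.mpr (hqstep i0 hi0'))) hpi0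
    linarith
  have hμmaps : Set.MapsTo μ (Set.Icc 0 T) (Set.Icc 0 T) := by
    intro x hx
    exact ⟨hμ0 ▸ hμmono hx.1, hμT ▸ hμmono hx.2⟩
  refine ⟨μ, ?_, hμcont.continuousOn, hμstrict, ⟨hμmaps, hμstrict.injOn, ?_⟩, hμ0, hμT, ?_⟩
  · -- piecewise linear
    refine ⟨n + 1, le_rfl, fun i => q i.1, ?_, ?_, ?_, ?_⟩
    · intro a b hab
      exact mono_of_step hqstep a.1 b.1 hab (by omega)
    · exact hq0
    · simpa using hqT
    · intro i
      refine ⟨(v (i.1 + 1) - v i.1) / (q (i.1 + 1) - q i.1),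
        v i.1 - (v (i.1 + 1) - v i.1) / (q (i.1 + 1) - q i.1) * q i.1, ?_⟩
      intro x hx
      have h1 : q i.1 ≤ x := by simpa using hx.1
      have h2 : x ≤ q (i.1 + 1) := by simpa [Fin.val_succ] using hx.2
      rw [hμ_def, interp_piece hqstep i.isLt h1 h2, hv0]
      ring
  · -- surjectivity
    have := intermediate_value_Icc hT.le hμcont.continuousOn
    rw [hμ0, hμT] at this
    exact this
  · -- the key pointwise identity
    intro x hx
    have hlx : l x ∈ Set.Icc (0 : ℝ) T := hbij.mapsTo hx
    have hμx : μ x ∈ Set.Icc (0 : ℝ) T := hμmaps hx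
    refine hg_step (μ x) hμx (l x) hlx fun j => ?_
    have hqj : q (j.1 + 1) = s j := by
      rw [hq_def, nodeF_mid T s (by omega) (by omega)]
      exact congrArg s (Fin.ext (by simp))
    have hvj : v (j.1 + 1) = t j := by
      rw [hv_def, nodeF_mid T t (by omega) (by omega)]
      exact congrArg t (Fin.ext (by simp))
    have hμq : μ (q (j.1 + 1)) = t j := by rw [hμnode (j.1 + 1) (by omega), hvj]
    have h1 : t j ≤ μ x ↔ q (j.1 + 1) ≤ x := by
      rw [← hμq]
      exact hμstrict.le_iff_le (hqmem _) hx
    have h2 : t j ≤ l x ↔ q (j.1 + 1) ≤ x := by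
      have : l (q (j.1 + 1)) = t j := by rw [hql, hvj]
      rw [← this]
      exact hmono.le_iff_le (hqmem _) hx
    rw [h1, h2]
end

section
/- The output of an ASC with integer delays at time t depends only on inputs at times with the same fractional part: if two inputs i₁, i₂ : [0,T] → {0,1}^m agree at all times s ≤ t with frac(s) = frac(t), then the outputs of the ASC on i₁ and i₂ agree at time t. -/
/-- The output of an ASC with integer delays at time `t` depends only on the
inputs at times `s ≤ t` having the same fractional part as `t`. -/
theorem asc_output_depends_on_fract (m n k : ℕ)
    (d : Fin k → ℕ) (hd : ∀ j, 1 ≤ d j)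
    (f : (Fin m → Bool) → (Fin k → Bool) → (Fin k → Bool))
    (g : (Fin m → Bool) → (Fin k → Bool) → (Fin n → Bool))
    (i₁ i₂ : ℝ → (Fin m → Bool)) (y₁ y₂ z₁ z₂ : ℝ → (Fin k → Bool))
    (o₁ o₂ : ℝ → (Fin n → Bool))
    (hy₁ : ∀ t : ℝ, 0 ≤ t → ∀ j : Fin k,
      y₁ t j = if t < (d j : ℝ) then false else z₁ (t - (d j : ℝ)) j)
    (hz₁ : ∀ t : ℝ, 0 ≤ t → z₁ t = f (i₁ t) (y₁ t))
    (ho₁ : ∀ t : ℝ, 0 ≤ t → o₁ t = g (i₁ t) (y₁ t))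
    (hy₂ : ∀ t : ℝ, 0 ≤ t → ∀ j : Fin k,
      y₂ t j = if t < (d j : ℝ) then false else z₂ (t - (d j : ℝ)) j)
    (hz₂ : ∀ t : ℝ, 0 ≤ t → z₂ t = f (i₂ t) (y₂ t))
    (ho₂ : ∀ t : ℝ, 0 ≤ t → o₂ t = g (i₂ t) (y₂ t))
    (t : ℝ) (ht : 0 ≤ t)
    (hagree : ∀ s : ℝ, 0 ≤ s → s ≤ t → Int.fract s = Int.fract t → i₁ s = i₂ s) :
    o₁ t = o₂ t := by
  have key : ∀ N : ℕ, ∀ s : ℝ, 0 ≤ s → s ≤ t → Int.fract s = Int.fract t →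
      ⌊s⌋ < (N : ℤ) → y₁ s = y₂ s := by
    intro N
    induction N with
    | zero =>
      intro s hs0 _ _ hfl
      have := Int.floor_nonneg.mpr hs0
      omega
    | succ N ih =>
      intro s hs0 hst hfr hfl
      funext j
      rw [hy₁ s hs0 j, hy₂ s hs0 j]
      by_cases h : s < (d j : ℝ)
      · simp [h]
      · simp only [h, if_false]
        push_neg at h
        have hdj1 : (1 : ℝ) ≤ d j := by exact_mod_cast hd j
        have hs' : 0 ≤ s - d j := by linarith
        have hst' : s - d j ≤ t := by linarith
        have hfr' : Int.fract (s - d j) = Int.fract t := by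
          rw [← hfr]
          have : s - (d j : ℝ) = s - ((d j : ℤ) : ℝ) := by push_cast; ring
          rw [this, Int.fract_sub_intCast]
        have hfl' : ⌊s - (d j : ℝ)⌋ < (N : ℤ) := by
          rw [Int.floor_sub_natCast]
          have := hd j
          omega
        have hy := ih (s - d j) hs' hst' hfr' hfl'
        rw [hz₁ _ hs', hz₂ _ hs', hy, hagree _ hs' hst' hfr']
  have hyt : y₁ t = y₂ t := by
    refine key (⌊t⌋.toNat + 1) t ht le_rfl rfl ?_
    have := Int.floor_nonneg.mpr ht
    omega
  rw [ho₁ t ht, ho₂ t ht, hyt, hagree t ht le_rfl rfl]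
end
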